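/- A sequence f : ℕ → 𝕂 (𝕂 a field of characteristic zero) is k-regular if and only if there exist a positive integer d, matrices A_0, ..., A_{k-1} in 𝕂^{d×d}, and vectors v, w in 𝕂^d such that for every n with base-k expansion (n)_k = i_s ⋯ i_0, one has f(n) = wᵀ A_{i_0} ⋯ A_{i_s} v. -/

import Mathlib

open Filter Matrix

noncomputable def mnorm {d : ℕ} (A : Matrix (Fin d) (Fin d) ℂ) : ℝ :=
  ‖Matrix.toEuclideanCLM (𝕜 := ℂ) (n := Fin d) A‖

/-- The joint spectral radius of a finite family of matrices. -/
noncomputable def jsr {k d : ℕ} (A : Fin k → Matrix (Fin d) (Fin d) ℂ) : ℝ :=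
  Filter.limsup (fun n : ℕ =>
    ⨆ w : Fin n → Fin k, mnorm (List.ofFn (fun j => A (w j))).prod ^ ((n : ℝ)⁻¹))
    Filter.atTop

/-- The spectral radius of a single matrix. -/
noncomputable def specRad {d : ℕ} (A : Matrix (Fin d) (Fin d) ℂ) : ℝ :=
  (spectralRadius ℂ A).toReal

/-- The k-kernel of a sequence. -/
def kKernel {K : Type*} (k : ℕ) (f : ℕ → K) : Set (ℕ → K) :=
  {g | ∃ ℓ r : ℕ, r < k ^ ℓ ∧ g = fun n => f (k ^ ℓ * n + r)}

/-- A sequence is k-regular if the span of its k-kernel is finite dimensional. -/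
def IsKRegular (K : Type*) [Field K] (k : ℕ) (f : ℕ → K) : Prop :=
  FiniteDimensional K (Submodule.span K (kKernel k f))

/-- The product A_{i_0} ⋯ A_{i_s} along the base-k digits (n)_k = i_s ⋯ i_0 of n. -/
def digProd {K : Type*} [Semiring K] {d k : ℕ} (A : Fin k → Matrix (Fin d) (Fin d) K)
    (n : ℕ) : Matrix (Fin d) (Fin d) K :=
  ((Nat.digits k n).map (fun i => if h : i < k then A ⟨i, h⟩ else 1)).prod

lemma digProd_zero {K : Type*} [Semiring K] {d k : ℕ} (A : Fin k → Matrix (Fin d) (Fin d) K) :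
    digProd A 0 = 1 := by simp [digProd]

lemma digProd_step {K : Type*} [Semiring K] {d k : ℕ} (hk : 2 ≤ k)
    (A : Fin k → Matrix (Fin d) (Fin d) K) (m : ℕ) (hm : m ≠ 0) :
    digProd A m = A ⟨m % k, Nat.mod_lt m (by omega)⟩ * digProd A (m / k) := by
  unfold digProd
  rw [Nat.digits_def' (by omega : 1 < k) (Nat.pos_of_ne_zero hm), List.map_cons,
    List.prod_cons, dif_pos]

section Main
variable {K : Type*} [Field K]

/-- linear shift map g ↦ (n ↦ g (k*n+j)) -/
def shiftL (k j : ℕ) : (ℕ → K) →ₗ[K] (ℕ → K) where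
  toFun g := fun n => g (k * n + j)
  map_add' _ _ := rfl
  map_smul' _ _ := rfl

lemma shift_mem_span {k : ℕ} (f : ℕ → K) {j : ℕ} (hj : j < k)
    {g : ℕ → K} (hg : g ∈ Submodule.span K (kKernel k f)) :
    shiftL k j g ∈ Submodule.span K (kKernel k f) := by
  induction hg using Submodule.span_induction with
  | mem x hx =>
    obtain ⟨ℓ, r, hr, rfl⟩ := hx
    refine Submodule.subset_span ⟨ℓ + 1, k ^ ℓ * j + r, ?_, ?_⟩
    · have : k ^ ℓ * j + r < k ^ ℓ * j + k ^ ℓ := by omega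
      calc k ^ ℓ * j + r < k ^ ℓ * (j + 1) := by ring_nf; omega
        _ ≤ k ^ ℓ * k := Nat.mul_le_mul_left _ (by omega)
        _ = k ^ (ℓ + 1) := (pow_succ k ℓ).symm
    · funext n
      show f (k ^ ℓ * (k * n + j) + r) = f (k ^ (ℓ + 1) * n + (k ^ ℓ * j + r))
      ring_nf
  | zero => simp
  | add x y _ _ hx hy => rw [map_add]; exact Submodule.add_mem _ hx hy
  | smul c x _ hx => rw [_root_.map_smul]; exact Submodule.smul_mem _ _ hx

theorem forward {k : ℕ} (hk : 2 ≤ k) (f : ℕ → K) (hreg : IsKRegular K k f) :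
    ∃ d : ℕ, 0 < d ∧ ∃ A : Fin k → Matrix (Fin d) (Fin d) K, ∃ v w : Fin d → K,
      ∀ n : ℕ, f n = dotProduct w ((digProd A n).mulVec v) := by
  set S := Submodule.span K (kKernel k f) with hS
  have : FiniteDimensional K S := hreg
  have hfker : f ∈ kKernel k f := ⟨0, 0, by norm_num, by funext n; simp⟩
  have hfS : f ∈ S := Submodule.subset_span hfker
  by_cases hd0 : Module.finrank K S = 0
  · -- span is trivial, f = 0
    have hbot : S = ⊥ := Submodule.finrank_eq_zero.mp hd0
    have hf0 : f = 0 := by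
      have := hfS; rw [hbot, Submodule.mem_bot] at this; exact this
    refine ⟨1, one_pos, fun _ => 1, 0, 0, fun n => ?_⟩
    simp [hf0, dotProduct]
  · set d := Module.finrank K S with hdd
    let b : Module.Basis (Fin d) K S := Module.finBasis K S
    let A : Fin k → Matrix (Fin d) (Fin d) K := fun j =>
      Matrix.of fun i i' => b.repr ⟨shiftL (K := K) k j (b i), shift_mem_span f j.2 (b i).2⟩ i'
    let V : ℕ → Fin d → K := fun n i => (b i : ℕ → K) n
    have hVrec : ∀ (m : ℕ) (j : Fin k), V (k * m + j) = (A j).mulVec (V m) := by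
      intro m j
      funext i
      have hmem := shift_mem_span f j.2 (b i).2
      set t : S := ⟨shiftL (K := K) k j (b i), hmem⟩ with ht
      have hrep : (Finset.univ.sum fun i' => b.repr t i' • b i') = t := b.sum_repr t
      have := congrArg (fun x : S => (x : ℕ → K) m) hrep
      simp only [AddSubmonoidClass.coe_finset_sum, SetLike.val_smul, Finset.sum_apply,
        Pi.smul_apply, smul_eq_mul] at this
      simp only [Matrix.mulVec, dotProduct]
      exact this.symm
    have hVmain : ∀ n : ℕ, V n = (digProd A n).mulVec (V 0) := by
      intro n
      induction n using Nat.strong_induction_on with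
      | _ n ih =>
        rcases Nat.eq_zero_or_pos n with rfl | hn
        · rw [digProd_zero, Matrix.one_mulVec]
        · have hne : n ≠ 0 := hn.ne'
          have h1 : n = k * (n / k) + n % k := (Nat.div_add_mod n k).symm
          have hdiv : n / k < n := Nat.div_lt_self hn (by omega)
          calc V n = V (k * (n / k) + n % k) := by rw [← h1]
            _ = (A ⟨n % k, Nat.mod_lt n (by omega)⟩).mulVec (V (n / k)) :=
                hVrec (n / k) ⟨n % k, Nat.mod_lt n (by omega)⟩
            _ = (A ⟨n % k, Nat.mod_lt n (by omega)⟩).mulVec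
                ((digProd A (n / k)).mulVec (V 0)) := by rw [ih _ hdiv]
            _ = (digProd A n).mulVec (V 0) := by
                rw [digProd_step hk A n hne, ← Matrix.mulVec_mulVec]
    refine ⟨d, Nat.pos_of_ne_zero hd0, A, V 0, fun i => b.repr ⟨f, hfS⟩ i, fun n => ?_⟩
    have hrep : (Finset.univ.sum fun i => b.repr ⟨f, hfS⟩ i • b i) = ⟨f, hfS⟩ :=
      b.sum_repr ⟨f, hfS⟩
    have := congrArg (fun x : S => (x : ℕ → K) n) hrep
    simp only [AddSubmonoidClass.coe_finset_sum, SetLike.val_smul, Finset.sum_apply,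
      Pi.smul_apply, smul_eq_mul] at this
    rw [dotProduct, ← hVmain n]
    exact this.symm
end Main

section Rev
variable {K : Type*} [Field K]

theorem key_rev {k d : ℕ} (hk : 2 ≤ k) (f : ℕ → K)
    (A : Fin k → Matrix (Fin d) (Fin d) K) (v w : Fin d → K)
    (hf : ∀ n : ℕ, f n = dotProduct w ((digProd A n).mulVec v)) :
    ∀ ℓ r : ℕ, r < k ^ ℓ → ∃ u : Fin d → K, ∀ n : ℕ, 1 ≤ n →
      f (k ^ ℓ * n + r) = dotProduct u ((digProd A n).mulVec v) := by
  intro ℓ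
  induction ℓ with
  | zero =>
    intro r hr
    have hr0 : r = 0 := by simpa [Nat.lt_one_iff] using hr
    subst hr0
    exact ⟨w, fun n _ => by simpa using hf n⟩
  | succ ℓ ih =>
    intro r hr
    have hkl : 0 < k ^ ℓ := Nat.pow_pos (by omega)
    have hj : r / k ^ ℓ < k := by
      rw [Nat.div_lt_iff_lt_mul hkl]
      calc r < k ^ (ℓ + 1) := hr
        _ = k * k ^ ℓ := by ring
    obtain ⟨u', hu'⟩ := ih (r % k ^ ℓ) (Nat.mod_lt _ hkl)
    refine ⟨Matrix.vecMul u' (A ⟨r / k ^ ℓ, hj⟩), fun n hn => ?_⟩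
    have hmne : k * n + r / k ^ ℓ ≠ 0 := by positivity
    have harith : k ^ (ℓ + 1) * n + r = k ^ ℓ * (k * n + r / k ^ ℓ) + r % k ^ ℓ := by
      have hdm := Nat.div_add_mod r (k ^ ℓ)
      calc k ^ (ℓ + 1) * n + r
          = k ^ (ℓ + 1) * n + (k ^ ℓ * (r / k ^ ℓ) + r % k ^ ℓ) := by rw [hdm]
        _ = k ^ ℓ * (k * n + r / k ^ ℓ) + r % k ^ ℓ := by ring
    rw [harith, hu' _ (Nat.one_le_iff_ne_zero.mpr hmne),
      digProd_step hk A (k * n + r / k ^ ℓ) hmne]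
    have h1 : (k * n + r / k ^ ℓ) % k = r / k ^ ℓ := by
      rw [Nat.mul_add_mod]; exact Nat.mod_eq_of_lt hj
    have h2 : (k * n + r / k ^ ℓ) / k = n := by
      rw [Nat.mul_add_div (by omega)]
      simp [Nat.div_eq_of_lt hj]
    have hA : A ⟨(k * n + r / k ^ ℓ) % k, Nat.mod_lt _ (by omega)⟩ = A ⟨r / k ^ ℓ, hj⟩ := by
      exact congrArg A (Fin.mk_eq_mk.mpr h1)
    rw [hA, h2, ← Matrix.mulVec_mulVec, dotProduct_mulVec]

theorem reverse {k d : ℕ} (hk : 2 ≤ k) (f : ℕ → K)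
    (A : Fin k → Matrix (Fin d) (Fin d) K) (v w : Fin d → K)
    (hf : ∀ n : ℕ, f n = dotProduct w ((digProd A n).mulVec v)) :
    IsKRegular K k f := by
  classical
  let h : Fin d → (ℕ → K) := fun i => fun n => ((digProd A n).mulVec v) i
  let δ : ℕ → K := fun n => if n = 0 then 1 else 0
  let W : Submodule K (ℕ → K) := Submodule.span K (Set.range h ∪ {δ})
  have hWfd : FiniteDimensional K W :=
    FiniteDimensional.span_of_finite K ((Set.finite_range h).union (Set.finite_singleton δ))
  have hsub : kKernel k f ⊆ (W : Set (ℕ → K)) := by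
    rintro g ⟨ℓ, r, hr, rfl⟩
    obtain ⟨u, hu⟩ := key_rev hk f A v w hf ℓ r hr
    have hrepr : (fun n => f (k ^ ℓ * n + r)) =
        (Finset.univ.sum fun i => u i • h i) +
          (f (k ^ ℓ * 0 + r) - dotProduct u ((digProd A 0).mulVec v)) • δ := by
      funext n
      rcases Nat.eq_zero_or_pos n with rfl | hn
      · simp [δ, h, dotProduct, Finset.sum_apply]
      · have hδ : δ n = 0 := if_neg hn.ne'
        simp only [Pi.add_apply, Pi.smul_apply, hδ, smul_eq_mul, mul_zero, add_zero,
          Finset.sum_apply, smul_eq_mul]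
        rw [hu n hn]
        simp [dotProduct, h]
    rw [hrepr]
    refine Submodule.add_mem _ (Submodule.sum_mem _ fun i _ => Submodule.smul_mem _ _ ?_)
      (Submodule.smul_mem _ _ ?_)
    · exact Submodule.subset_span (Or.inl ⟨i, rfl⟩)
    · exact Submodule.subset_span (Or.inr rfl)
  have hle : Submodule.span K (kKernel k f) ≤ W := Submodule.span_le.mpr hsub
  exact Submodule.finiteDimensional_of_le hle
end Rev

/-- a sequence is k-regular iff it admits a linear representation
    f(n) = wᵀ A_{i_0} ⋯ A_{i_s} v along the base-k digits of n. -/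
theorem stmt0 {K : Type*} [Field K] [CharZero K] {k : ℕ} (hk : 2 ≤ k) (f : ℕ → K) :
    IsKRegular K k f ↔
      ∃ d : ℕ, 0 < d ∧ ∃ A : Fin k → Matrix (Fin d) (Fin d) K, ∃ v w : Fin d → K,
        ∀ n : ℕ, f n = dotProduct w ((digProd A n).mulVec v) := by
  constructor
  · exact fun hreg => forward hk f hreg
  · rintro ⟨d, _, A, v, w, h⟩
    exact reverse hk f A v w h
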